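/- Let f be a positive continuous density with CDF F. Define R(a) = (s/c)·∫_{F⁻¹(1 - (c0 + a·c)/s)}^{u0} x f(x) dx + ((1-s)/c)·∫_{F⁻¹(1 - (c1 + (1-a)·c)/(1-s))}^{u1} x f(x) dx on the interior of the feasible interval. Then R''(a) = -(c/s)/f(F⁻¹(1 - (c0 + a·c)/s)) - (c/(1-s))/f(F⁻¹(1 - (c1 + (1-a)·c)/(1-s))) < 0, so R is strictly concave. -/

import Mathlib

open Set intervalIntegral

/-- Derivative of a right inverse of `F`. -/
lemma finv_hasDerivAt {f F Finv : ℝ → ℝ}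
    (hf : Continuous f) (hfpos : ∀ x, 0 < f x)
    (hF : ∀ x, HasDerivAt F (f x) x) (hFmono : StrictMono F)
    (hinv : ∀ q ∈ Set.Ioo (0:ℝ) 1, F (Finv q) = q)
    {q : ℝ} (hq : q ∈ Set.Ioo (0:ℝ) 1) :
    HasDerivAt Finv (f (Finv q))⁻¹ q := by
  have hFx : F (Finv q) = q := hinv q hq
  have hC1 : ContDiff ℝ 1 F := by
    rw [contDiff_one_iff_deriv]
    refine ⟨fun x => (hF x).differentiableAt, ?_⟩
    have : deriv F = f := funext fun x => (hF x).deriv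
    rw [this]; exact hf
  have hstrict : HasStrictDerivAt F (f (Finv q)) (Finv q) := by
    have h := (hC1.contDiffAt (x := Finv q)).hasStrictDerivAt one_ne_zero
    rwa [(hF (Finv q)).deriv] at h
  have hne : f (Finv q) ≠ 0 := (hfpos _).ne'
  have hev : ∀ᶠ x in nhds (Finv q), Finv (F x) = x := by
    have hcont : ContinuousAt F (Finv q) := (hF (Finv q)).continuousAt
    have hmem : Set.Ioo (0:ℝ) 1 ∈ nhds (F (Finv q)) := by
      rw [hFx]; exact isOpen_Ioo.mem_nhds hq
    filter_upwards [hcont.preimage_mem_nhds hmem] with x hx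
    exact hFmono.injective (hinv _ hx)
  have h := hstrict.to_local_left_inverse hne hev
  rw [hFx] at h
  exact h.hasDerivAt

theorem stmt14 (f F Finv : ℝ → ℝ) (c0 c1 c s u0 u1 l u : ℝ)
    (hf : Continuous f) (hfpos : ∀ x, 0 < f x)
    (hF : ∀ x, HasDerivAt F (f x) x) (hFmono : StrictMono F)
    (hinv : ∀ q ∈ Set.Ioo (0:ℝ) 1, F (Finv q) = q)
    (hs : s ∈ Set.Ioo (0:ℝ) 1) (hc : c ∈ Set.Ioo (0:ℝ) 1)
    (hc0 : 0 ≤ c0) (hc1 : 0 ≤ c1) (hlu : l < u)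
    (hargs : ∀ a ∈ Set.Ioo l u,
      (1 - (c0 + a * c) / s) ∈ Set.Ioo (0:ℝ) 1 ∧
      (1 - (c1 + (1 - a) * c) / (1 - s)) ∈ Set.Ioo (0:ℝ) 1)
    (R : ℝ → ℝ)
    (hR : ∀ a, R a = (s / c) * (∫ x in (Finv (1 - (c0 + a * c) / s))..u0, x * f x)
        + ((1 - s) / c) * ∫ x in (Finv (1 - (c1 + (1 - a) * c) / (1 - s)))..u1, x * f x) :
    (∀ a ∈ Set.Ioo l u,
      deriv (deriv R) a
          = -(c / s) / f (Finv (1 - (c0 + a * c) / s))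
            - (c / (1 - s)) / f (Finv (1 - (c1 + (1 - a) * c) / (1 - s)))
        ∧ deriv (deriv R) a < 0) ∧
    StrictConcaveOn ℝ (Set.Ioo l u) R := by
  obtain ⟨hs0, hs1⟩ := hs
  obtain ⟨hcpos, hc1'⟩ := hc
  have hs1' : (0:ℝ) < 1 - s := by linarith
  set g0 : ℝ → ℝ := fun a => Finv (1 - (c0 + a * c) / s) with hg0
  set g1 : ℝ → ℝ := fun a => Finv (1 - (c1 + (1 - a) * c) / (1 - s)) with hg1
  have hφ : Continuous (fun x : ℝ => x * f x) := continuous_id.mul hf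
  -- derivatives of g0, g1 on Ioo l u
  have hg0' : ∀ a ∈ Set.Ioo l u, HasDerivAt g0 (-(c / s) / f (g0 a)) a := by
    intro a ha
    have hq := (hargs a ha).1
    have hin : HasDerivAt (fun a : ℝ => 1 - (c0 + a * c) / s) (-(c / s)) a := by
      have h1 := ((((hasDerivAt_id a).mul_const c).const_add c0).div_const s).const_sub 1
      simpa using h1
    have h2 := (finv_hasDerivAt hf hfpos hF hFmono hinv hq).comp a hin
    convert h2 using 1
    show -(c / s) / f (g0 a) = (f (g0 a))⁻¹ * -(c / s)
    rw [div_eq_mul_inv, mul_comm]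
    all_goals rfl
  have hg1' : ∀ a ∈ Set.Ioo l u, HasDerivAt g1 ((c / (1 - s)) / f (g1 a)) a := by
    intro a ha
    have hq := (hargs a ha).2
    have hin : HasDerivAt (fun a : ℝ => 1 - (c1 + (1 - a) * c) / (1 - s)) (c / (1 - s)) a := by
      have h1 := (((((hasDerivAt_id a).const_sub 1).mul_const c).const_add c1).div_const
        (1 - s)).const_sub 1
      simpa [neg_div] using h1
    have h2 := (finv_hasDerivAt hf hfpos hF hFmono hinv hq).comp a hin
    convert h2 using 1
    show (c / (1 - s)) / f (g1 a) = (f (g1 a))⁻¹ * (c / (1 - s))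
    rw [div_eq_mul_inv, mul_comm]
    all_goals rfl
  -- first derivative of R
  have hR' : ∀ a ∈ Set.Ioo l u, HasDerivAt R (g0 a - g1 a) a := by
    intro a ha
    have hI0 : HasDerivAt (fun y : ℝ => ∫ x in y..u0, x * f x) (-(g0 a * f (g0 a))) (g0 a) := by
      have h := intervalIntegral.integral_hasDerivAt_right
        (hφ.intervalIntegrable u0 (g0 a))
        (hφ.stronglyMeasurableAtFilter _ _) hφ.continuousAt
      have h2 := h.neg
      simpa [intervalIntegral.integral_symm u0, Pi.neg_def] using h2
    have hI1 : HasDerivAt (fun y : ℝ => ∫ x in y..u1, x * f x) (-(g1 a * f (g1 a))) (g1 a) := by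
      have h := intervalIntegral.integral_hasDerivAt_right
        (hφ.intervalIntegrable u1 (g1 a))
        (hφ.stronglyMeasurableAtFilter _ _) hφ.continuousAt
      have h2 := h.neg
      simpa [intervalIntegral.integral_symm u1, Pi.neg_def] using h2
    have H0 := (hI0.comp a (hg0' a ha)).const_mul (s / c)
    have H1 := (hI1.comp a (hg1' a ha)).const_mul ((1 - s) / c)
    have H := H0.add H1
    have hfun : R = fun a => (s / c) * (∫ x in (g0 a)..u0, x * f x)
        + ((1 - s) / c) * ∫ x in (g1 a)..u1, x * f x := funext hR
    rw [hfun]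
    convert H using 1
    rotate_left 3
    have hf0 : f (g0 a) ≠ 0 := (hfpos _).ne'
    have hf1 : f (g1 a) ≠ 0 := (hfpos _).ne'
    field_simp
    ring
    all_goals rfl
  -- second derivative of R
  have hR'' : ∀ a ∈ Set.Ioo l u, HasDerivAt (deriv R)
      (-(c / s) / f (g0 a) - (c / (1 - s)) / f (g1 a)) a := by
    intro a ha
    have h := (hg0' a ha).sub (hg1' a ha)
    apply h.congr_of_eventuallyEq
    filter_upwards [isOpen_Ioo.mem_nhds ha] with b hb
    exact (hR' b hb).deriv
  have hneg : ∀ a ∈ Set.Ioo l u,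
      -(c / s) / f (g0 a) - (c / (1 - s)) / f (g1 a) < 0 := by
    intro a ha
    have h1 : 0 < (c / s) / f (g0 a) := div_pos (div_pos hcpos hs0) (hfpos _)
    have h2 : 0 < (c / (1 - s)) / f (g1 a) := div_pos (div_pos hcpos hs1') (hfpos _)
    have : -(c / s) / f (g0 a) = -((c / s) / f (g0 a)) := by ring
    rw [this]; linarith
  constructor
  · intro a ha
    have hd := (hR'' a ha).deriv
    exact ⟨hd, by rw [hd]; exact hneg a ha⟩
  · apply strictConcaveOn_of_deriv2_neg (convex_Ioo l u)
    · exact fun a ha => (hR' a ha).continuousAt.continuousWithinAt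
    · intro a ha
      rw [interior_Ioo] at ha
      have : deriv^[2] R a = deriv (deriv R) a := by
        simp [Function.iterate_succ, Function.iterate_zero]
      rw [this, (hR'' a ha).deriv]
      exact hneg a ha
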